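/- With ${\mathbf v}^k = (\{d+1-k\}^k, \{-k\}^{d+1-k})$ and ${\mathbf v}^\circ$ as above, and $z_k({\mathbf t}) = {\mathsf{TC}}_{{\mathbf v}^k}({\mathbf t})$, one has $z_k({\mathbf t})\,{\mathsf{TS}}_{{\mathbf v}^\circ}({\mathbf t}) = \frac{k!(d+1-k)!}{(d+1)!}\,{\mathsf{TS}}_{{\mathbf v}^\circ + {\mathbf v}^k}({\mathbf t})$ for $1 \le k \le d$. -/

import Mathlib

open Real Complex

/-- The exponential `φ_k(t) = e^{2πi k·t/(d+1)}`. -/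
noncomputable def phiH (d : ℕ) (k : Fin (d + 1) → ℤ) (t : Fin (d + 1) → ℝ) : ℂ :=
  Complex.exp (2 * π * Complex.I / ((d : ℂ) + 1) * ∑ i, (k i : ℂ) * (t i : ℂ))

/-- The generalized cosine `TC_k`. -/
noncomputable def TCos (d : ℕ) (k : Fin (d + 1) → ℤ) (t : Fin (d + 1) → ℝ) : ℂ :=
  (1 / (Nat.factorial (d + 1) : ℂ)) * ∑ σ : Equiv.Perm (Fin (d + 1)), phiH d (k ∘ σ) t

/-- The generalized sine `TS_k`. -/
noncomputable def TSin (d : ℕ) (k : Fin (d + 1) → ℤ) (t : Fin (d + 1) → ℝ) : ℂ :=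
  (1 / (Nat.factorial (d + 1) : ℂ)) * ∑ σ : Equiv.Perm (Fin (d + 1)),
    ((Equiv.Perm.sign σ : ℤ) : ℂ) * phiH d (k ∘ σ) t

/-- The special index `v° ∈ ℤ^{d+1}` with `v°_j = (d + 2 - 2j)(d+1)/2` (1-based `j`). -/
def vCirc (d : ℕ) : Fin (d + 1) → ℤ := fun i => ((d : ℤ) - 2 * (i : ℤ)) * ((d : ℤ) + 1) / 2

/-- The vertex index `v^k = ({d+1-k}^k, {-k}^{d+1-k})`. -/
def vK (d k : ℕ) : Fin (d + 1) → ℤ := fun i => if (i : ℕ) < k then (d : ℤ) + 1 - k else -(k : ℤ)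

section Aux

open Equiv Finset

lemma phiH_mul (d : ℕ) (a b : Fin (d + 1) → ℤ) (t : Fin (d + 1) → ℝ) :
    phiH d a t * phiH d b t = phiH d (fun i => a i + b i) t := by
  unfold phiH
  rw [← Complex.exp_add, ← mul_add, ← Finset.sum_add_distrib]
  congr 2
  refine Finset.sum_congr rfl fun i _ => ?_
  push_cast
  ring

lemma TSin_eq_zero_of_eq (d : ℕ) (m : Fin (d + 1) → ℤ) (t : Fin (d + 1) → ℝ)
    {i j : Fin (d + 1)} (hij : i ≠ j) (hm : m i = m j) : TSin d m t = 0 := by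
  unfold TSin
  have hcomp : ∀ σ : Equiv.Perm (Fin (d + 1)), m ∘ ((Equiv.swap i j) * σ) = m ∘ σ := by
    intro σ; funext x
    simp only [Function.comp, Equiv.Perm.mul_apply]
    rcases eq_or_ne (σ x) i with h | h
    · rw [h, Equiv.swap_apply_left, hm]
    rcases eq_or_ne (σ x) j with h' | h'
    · rw [h', Equiv.swap_apply_right, hm]
    · rw [Equiv.swap_apply_of_ne_of_ne h h']
  set f : Equiv.Perm (Fin (d + 1)) → ℂ :=
    fun σ => ((Equiv.Perm.sign σ : ℤ) : ℂ) * phiH d (m ∘ σ) t with hf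
  have key : ∑ σ, f σ = -∑ σ, f σ := by
    calc ∑ σ, f σ = ∑ σ, f (Equiv.swap i j * σ) :=
      (Fintype.sum_equiv (Equiv.mulLeft (Equiv.swap i j))
        (fun σ => f (Equiv.swap i j * σ)) f (fun σ => by rw [Equiv.coe_mulLeft])).symm
    _ = -∑ σ, f σ := by
      rw [← Finset.sum_neg_distrib]
      refine Finset.sum_congr rfl fun σ _ => ?_
      rw [hf]
      simp only [hcomp σ, Equiv.Perm.sign_mul, Equiv.Perm.sign_swap hij]
      push_cast
      ring
  have hz : ∑ σ, f σ = 0 := by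
    have h2 : (2 : ℂ) * ∑ σ, f σ = 0 := by linear_combination key
    exact (mul_eq_zero.mp h2).resolve_left two_ne_zero
  rw [hz, mul_zero]

lemma TCos_mul_TSin (d : ℕ) (a b : Fin (d + 1) → ℤ) (t : Fin (d + 1) → ℝ) :
    TCos d a t * TSin d b t =
      (1 / (Nat.factorial (d + 1) : ℂ)) *
        ∑ ρ : Equiv.Perm (Fin (d + 1)), TSin d (fun i => b i + a (ρ i)) t := by
  unfold TCos TSin
  rw [← Finset.mul_sum]
  have key : ∀ τ : Equiv.Perm (Fin (d + 1)),
      (∑ σ : Equiv.Perm (Fin (d + 1)),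
        phiH d (a ∘ σ) t * (((Equiv.Perm.sign τ : ℤ) : ℂ) * phiH d (b ∘ τ) t))
      = ∑ ρ : Equiv.Perm (Fin (d + 1)),
          ((Equiv.Perm.sign τ : ℤ) : ℂ) * phiH d ((fun i => b i + a (ρ i)) ∘ τ) t := by
    intro τ
    rw [← Equiv.sum_comp (Equiv.mulRight τ)
      (fun σ => phiH d (a ∘ σ) t * (((Equiv.Perm.sign τ : ℤ) : ℂ) * phiH d (b ∘ τ) t))]
    refine Finset.sum_congr rfl fun ρ _ => ?_
    rw [mul_left_comm, Equiv.coe_mulRight, phiH_mul]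
    congr 2
    funext x
    simp only [Function.comp, Equiv.Perm.mul_apply]
    ring
  have hAB : (∑ σ : Equiv.Perm (Fin (d + 1)), ∑ τ : Equiv.Perm (Fin (d + 1)),
          phiH d (a ∘ σ) t * (((Equiv.Perm.sign τ : ℤ) : ℂ) * phiH d (b ∘ τ) t))
      = ∑ ρ : Equiv.Perm (Fin (d + 1)), ∑ τ : Equiv.Perm (Fin (d + 1)),
          ((Equiv.Perm.sign τ : ℤ) : ℂ) * phiH d ((fun i => b i + a (ρ i)) ∘ τ) t :=
    calc (∑ σ : Equiv.Perm (Fin (d + 1)), ∑ τ : Equiv.Perm (Fin (d + 1)),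
          phiH d (a ∘ σ) t * (((Equiv.Perm.sign τ : ℤ) : ℂ) * phiH d (b ∘ τ) t))
      = ∑ τ : Equiv.Perm (Fin (d + 1)), ∑ σ : Equiv.Perm (Fin (d + 1)),
          phiH d (a ∘ σ) t * (((Equiv.Perm.sign τ : ℤ) : ℂ) * phiH d (b ∘ τ) t) :=
        Finset.sum_comm
    _ = ∑ τ : Equiv.Perm (Fin (d + 1)), ∑ ρ : Equiv.Perm (Fin (d + 1)),
          ((Equiv.Perm.sign τ : ℤ) : ℂ) * phiH d ((fun i => b i + a (ρ i)) ∘ τ) t :=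
        Finset.sum_congr rfl fun τ _ => key τ
    _ = ∑ ρ : Equiv.Perm (Fin (d + 1)), ∑ τ : Equiv.Perm (Fin (d + 1)),
          ((Equiv.Perm.sign τ : ℤ) : ℂ) * phiH d ((fun i => b i + a (ρ i)) ∘ τ) t :=
        Finset.sum_comm
  rw [mul_mul_mul_comm, Finset.sum_mul_sum, hAB, mul_assoc]

lemma two_mul_vCirc (d : ℕ) (i : Fin (d + 1)) :
    2 * vCirc d i = ((d : ℤ) - 2 * (i : ℤ)) * ((d : ℤ) + 1) := by
  unfold vCirc
  rw [Int.mul_ediv_cancel']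
  rcases Int.even_or_odd (d : ℤ) with ⟨m, hm⟩ | ⟨m, hm⟩
  · exact ⟨(m - (i : ℤ)) * ((d : ℤ) + 1), by rw [hm]; ring⟩
  · exact ⟨((d : ℤ) - 2 * (i : ℤ)) * (m + 1), by rw [hm]; ring⟩

lemma good_or_bad (d k : ℕ) (ρ : Equiv.Perm (Fin (d + 1))) (hk : k ≤ d + 1) :
    (∀ i : Fin (d + 1), ((ρ i : ℕ) < k ↔ (i : ℕ) < k)) ∨
    ∃ i j : Fin (d + 1), (j : ℕ) = (i : ℕ) + 1 ∧ k ≤ (ρ i : ℕ) ∧ (ρ j : ℕ) < k := by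
  by_cases hb : ∃ i j : Fin (d + 1), (j : ℕ) = (i : ℕ) + 1 ∧ k ≤ (ρ i : ℕ) ∧ (ρ j : ℕ) < k
  · exact Or.inr hb
  left
  push_neg at hb
  -- step : smallness propagates downward one step
  have step : ∀ (m : ℕ) (h1 : m + 1 < d + 1),
      (ρ ⟨m + 1, h1⟩ : ℕ) < k → (ρ ⟨m, Nat.lt_of_succ_lt h1⟩ : ℕ) < k := by
    intro m h1 hlt
    by_contra h
    exact absurd (hb ⟨m, Nat.lt_of_succ_lt h1⟩ ⟨m + 1, h1⟩ rfl (Nat.le_of_not_lt h)) (by omega)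
  have aux : ∀ (n : ℕ) (l : Fin (d + 1)) (h : (l : ℕ) + n < d + 1),
      (ρ ⟨(l : ℕ) + n, h⟩ : ℕ) < k → (ρ l : ℕ) < k := by
    intro n
    induction n with
    | zero =>
      intro l h hlt
      exact hlt
    | succ n ih =>
      intro l h hlt
      exact ih l (by omega) (step ((l : ℕ) + n) (by omega) hlt)
  have down : ∀ (jj l : Fin (d + 1)), (l : ℕ) ≤ (jj : ℕ) → (ρ jj : ℕ) < k → (ρ l : ℕ) < k := by
    intro jj l hle hjj
    refine aux ((jj : ℕ) - (l : ℕ)) l (by omega) ?_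
    have : (⟨(l : ℕ) + ((jj : ℕ) - (l : ℕ)), by omega⟩ : Fin (d + 1)) = jj :=
      Fin.val_injective (show (l : ℕ) + ((jj : ℕ) - (l : ℕ)) = (jj : ℕ) by omega)
    rwa [this]
  have cardA : Fintype.card {l : Fin (d + 1) // (ρ l : ℕ) < k} = k := by
    rw [Fintype.card_congr (Equiv.subtypeEquiv (ρ : Fin (d + 1) ≃ Fin (d + 1))
      (q := fun j : Fin (d + 1) => (j : ℕ) < k) (fun a => Iff.rfl))]
    exact Fintype.card_fin_lt_of_le hk
  intro i
  constructor
  · intro hρ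
    by_contra hik
    have hki : k ≤ (i : ℕ) := Nat.le_of_not_lt hik
    have hinj : Function.Injective
        (fun l : {l : Fin (d + 1) // (l : ℕ) < (i : ℕ) + 1} =>
          (⟨l.1, down i l.1 (by omega) hρ⟩ : {l : Fin (d + 1) // (ρ l : ℕ) < k})) := by
      intro x y hxy
      exact Subtype.ext (by simpa [Subtype.ext_iff] using hxy)
    have := Fintype.card_le_of_injective _ hinj
    rw [cardA, Fintype.card_fin_lt_of_le (by omega : (i : ℕ) + 1 ≤ d + 1)] at this
    omega
  · intro hik
    by_contra hρ
    have hρ' : k ≤ (ρ i : ℕ) := Nat.le_of_not_lt hρ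
    have hinj : Function.Injective
        (fun l : {l : Fin (d + 1) // (ρ l : ℕ) < k} =>
          (⟨l.1, by
            by_contra hli
            exact hρ (down l.1 i (by omega) l.2)⟩ :
            {l : Fin (d + 1) // (l : ℕ) < (i : ℕ)})) := by
      intro x y hxy
      exact Subtype.ext (by simpa [Subtype.ext_iff] using hxy)
    have := Fintype.card_le_of_injective _ hinj
    rw [cardA, Fintype.card_fin_lt_of_le (by omega : (i : ℕ) ≤ d + 1)] at this
    omega

lemma card_good (d k : ℕ) (hk : k ≤ d + 1) :
    Fintype.card {ρ : Equiv.Perm (Fin (d + 1)) // ∀ i, ((ρ i : ℕ) < k ↔ (i : ℕ) < k)}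
      = Nat.factorial k * Nat.factorial (d + 1 - k) := by
  classical
  have e : (Equiv.Perm {i : Fin (d + 1) // (i : ℕ) < k} ×
      Equiv.Perm {i : Fin (d + 1) // ¬ (i : ℕ) < k}) ≃
      {ρ : Equiv.Perm (Fin (d + 1)) // ∀ i, ((ρ i : ℕ) < k ↔ (i : ℕ) < k)} :=
    { toFun := fun x => ⟨Equiv.Perm.subtypeCongr x.1 x.2, by
        intro i
        by_cases h : (i : ℕ) < k
        · rw [Equiv.Perm.subtypeCongr.left_apply
            (p := fun i : Fin (d + 1) => (i : ℕ) < k) x.1 x.2 h]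
          exact iff_of_true (x.1 ⟨i, h⟩).2 h
        · rw [Equiv.Perm.subtypeCongr.right_apply
            (p := fun i : Fin (d + 1) => (i : ℕ) < k) x.1 x.2 h]
          exact iff_of_false (x.2 ⟨i, h⟩).2 h⟩
      invFun := fun r => (r.1.subtypePerm (fun x => r.2 x),
        r.1.subtypePerm (fun x => not_congr (r.2 x)))
      left_inv := by
        rintro ⟨ep, en⟩
        dsimp only
        refine Prod.ext ?_ ?_
        · ext ⟨i, hi⟩
          simp only [Equiv.Perm.subtypePerm_apply]
          rw [Equiv.Perm.subtypeCongr.left_apply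
            (p := fun i : Fin (d + 1) => (i : ℕ) < k) ep en hi]
        · ext ⟨i, hi⟩
          simp only [Equiv.Perm.subtypePerm_apply]
          rw [Equiv.Perm.subtypeCongr.right_apply
            (p := fun i : Fin (d + 1) => (i : ℕ) < k) ep en hi]
      right_inv := by
        rintro ⟨ρ, hρ⟩
        refine Subtype.ext ?_
        dsimp only
        ext i
        by_cases h : (i : ℕ) < k
        · rw [Equiv.Perm.subtypeCongr.left_apply
            (p := fun i : Fin (d + 1) => (i : ℕ) < k) _ _ h]
          rfl
        · rw [Equiv.Perm.subtypeCongr.right_apply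
            (p := fun i : Fin (d + 1) => (i : ℕ) < k) _ _ h]
          rfl }
  rw [← Fintype.card_congr e, Fintype.card_prod, Fintype.card_perm, Fintype.card_perm,
    Fintype.card_fin_lt_of_le hk, Fintype.card_subtype_compl,
    Fintype.card_fin_lt_of_le hk, Fintype.card_fin]

end Aux

/-- `z_k TS_{v°} = (k!(d+1-k)!/(d+1)!) TS_{v° + v^k}`, where `z_k = TC_{v^k}`. -/
theorem zk_mul_TSin_vCirc (d k : ℕ) (hk1 : 1 ≤ k) (hkd : k ≤ d)
    (t : Fin (d + 1) → ℝ) (ht : ∑ i, t i = 0) :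
    TCos d (vK d k) t * TSin d (vCirc d) t =
      ((Nat.factorial k * Nat.factorial (d + 1 - k) : ℕ) : ℂ) /
          (Nat.factorial (d + 1) : ℂ) * TSin d (vCirc d + vK d k) t := by
  classical
  rw [TCos_mul_TSin]
  have hk : k ≤ d + 1 := by omega
  set good : Equiv.Perm (Fin (d + 1)) → Prop :=
    fun ρ => ∀ i, ((ρ i : ℕ) < k ↔ (i : ℕ) < k) with hgood
  have hsum : ∑ ρ : Equiv.Perm (Fin (d + 1)),
      TSin d (fun i => vCirc d i + vK d k (ρ i)) t
      = ((Nat.factorial k * Nat.factorial (d + 1 - k) : ℕ) : ℂ) *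
          TSin d (vCirc d + vK d k) t := by
    rw [← Finset.sum_filter_add_sum_filter_not Finset.univ good]
    have h2 : ∑ ρ ∈ Finset.univ.filter (fun ρ => ¬ good ρ),
        TSin d (fun i => vCirc d i + vK d k (ρ i)) t = 0 := by
      refine Finset.sum_eq_zero fun ρ hρ => ?_
      have hbad := (good_or_bad d k ρ hk).resolve_left (Finset.mem_filter.mp hρ).2
      obtain ⟨i, j, hji, hρi, hρj⟩ := hbad
      have hij : i ≠ j := by
        intro h
        rw [h] at hji
        omega
      refine TSin_eq_zero_of_eq d _ t hij ?_
      have hvi : vK d k (ρ i) = -(k : ℤ) := if_neg (by omega)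
      have hvj : vK d k (ρ j) = (d : ℤ) + 1 - k := if_pos hρj
      have hji' : (j : ℤ) = (i : ℤ) + 1 := by exact_mod_cast hji
      have h2' : (2 : ℤ) * (vCirc d i + vK d k (ρ i))
          = 2 * (vCirc d j + vK d k (ρ j)) := by
        rw [hvi, hvj, mul_add, mul_add, two_mul_vCirc, two_mul_vCirc, hji']
        ring
      exact mul_left_cancel₀ two_ne_zero h2'
    have h1 : ∑ ρ ∈ Finset.univ.filter good,
        TSin d (fun i => vCirc d i + vK d k (ρ i)) t
        = (Finset.univ.filter good).card • TSin d (vCirc d + vK d k) t := by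
      rw [← Finset.sum_const]
      refine Finset.sum_congr rfl fun ρ hρ => ?_
      have hg : good ρ := (Finset.mem_filter.mp hρ).2
      congr 1
      funext i
      show vCirc d i + vK d k (ρ i) = vCirc d i + vK d k i
      congr 1
      exact if_congr (hg i) rfl rfl
    have hcard : (Finset.univ.filter good).card
        = Nat.factorial k * Nat.factorial (d + 1 - k) := by
      rw [← Fintype.card_subtype]
      exact card_good d k hk
    rw [h1, h2, add_zero, hcard, nsmul_eq_mul]
  rw [hsum]
  ring
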